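/- arXiv:2411.06290 — 2 statements merged into one kernel-verified Lean document; each statement's English description precedes it below -/
import Mathlib

section
/- Let σ ∈ C¹(ℝ) with σ' > 0 everywhere, and let f₁,…,f_N ∈ L²(Y) be weakly linearly independent. If (a,b) ∈ ℝ × L²(Y) is a critical point of T_{F,r}(a,b) = ∑_j σ(a − ∫_Y b f_j dz) r_j, then r = 0. -/
open MeasureTheory

/-- If `σ ∈ C¹(ℝ)` with `σ' > 0` everywhere and `f₁,…,f_N ∈ L²(Y)` are weakly
linearly independent, then any critical point `(a,b)` of
`T_{F,r}(a,b) = ∑_j σ(a − ∫_Y b f_j) r_j` (i.e. `∑_j σ'(ξ_j) r_j = 0` and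
`∑_j σ'(ξ_j) r_j f_j = 0` in `L²(Y)`, with `ξ_j = a − ∫_Y b f_j`) forces `r = 0`. -/
theorem critical_point_implies_r_zero
    {d N : ℕ} (Y : Set (Fin d → ℝ)) (hYmeas : MeasurableSet Y)
    (σ : ℝ → ℝ) (hσ : ContDiff ℝ 1 σ) (hσ' : ∀ x, 0 < deriv σ x)
    (f : Fin N → (Fin d → ℝ) → ℝ) (hf : ∀ j, MemLp (f j) 2 (volume.restrict Y))
    (hwli : ∀ lam : Fin N → ℝ,
      (∀ᵐ y ∂(volume.restrict Y), ∑ j, lam j * f j y = 0) →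
      (∑ j, lam j = 0) → lam = 0)
    (r : Fin N → ℝ) (a : ℝ)
    (b : (Fin d → ℝ) → ℝ) (hb : MemLp b 2 (volume.restrict Y))
    (hcritA : ∑ j, deriv σ (a - ∫ z, b z * f j z ∂(volume.restrict Y)) * r j = 0)
    (hcritB : ∀ᵐ y ∂(volume.restrict Y),
      ∑ j, deriv σ (a - ∫ z, b z * f j z ∂(volume.restrict Y)) * r j * f j y = 0) :
    r = 0 := by
  set lam : Fin N → ℝ := fun j => deriv σ (a - ∫ z, b z * f j z ∂(volume.restrict Y)) * r j with hlam
  have h0 : lam = 0 := by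
    apply hwli lam
    · filter_upwards [hcritB] with y hy
      simpa [hlam, mul_assoc] using hy
    · simpa [hlam] using hcritA
  funext j
  have := congrFun h0 j
  simp only [hlam, Pi.zero_apply] at this
  have hpos := hσ' (a - ∫ z, b z * f j z ∂(volume.restrict Y))
  exact (mul_eq_zero.1 this).resolve_left (ne_of_gt hpos)
end

section
/- Let 𝒜 ⊆ ℝ × L²(Y) be nonempty, closed, bounded and convex, σ : ℝ → ℝ Lipschitz, f₁,…,f_N ∈ L²(Y), r ∈ ℝ^N. Then the functional T_{F,r}(a,b) = ∑_{j=1}^N σ(a − ∫_Y b f_j dz) r_j attains its minimum on 𝒜. -/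
open MeasureTheory Filter Topology Bornology Set

lemma nested_inter_nonempty {H : Type*} [NormedAddCommGroup H] [InnerProductSpace ℝ H]
    [CompleteSpace H] (B : ℕ → Set H) (hne : ∀ n, (B n).Nonempty)
    (hcl : ∀ n, IsClosed (B n)) (hconv : ∀ n, Convex ℝ (B n))
    (hmono : ∀ {n m : ℕ}, n ≤ m → B m ⊆ B n) (hbdd : Bornology.IsBounded (B 0)) :
    (⋂ n, B n).Nonempty := by
  classical
  have hchoice : ∀ n, ∃ v ∈ B n, ‖(0:H) - v‖ = ⨅ w : B n, ‖(0:H) - w‖ := fun n =>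
    exists_norm_eq_iInf_of_complete_convex (hne n) ((hcl n).isComplete) (hconv n) 0
  choose p hpB hp using hchoice
  haveI : ∀ n, Nonempty (B n) := fun n => (hne n).to_subtype
  set d : ℕ → ℝ := fun n => ⨅ w : B n, ‖(0:H) - w‖ with hd
  have hpn : ∀ n, ‖p n‖ = d n := fun n => by
    have := hp n; rwa [zero_sub, norm_neg] at this
  have hbb : ∀ n, BddBelow (Set.range fun w : B n => ‖(0:H) - w‖) :=
    fun n => ⟨0, Set.forall_mem_range.2 fun _ => norm_nonneg _⟩
  have hd_le : ∀ n, ∀ w ∈ B n, d n ≤ ‖w‖ := by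
    intro n w hw
    have := ciInf_le (hbb n) (⟨w, hw⟩ : B n)
    rwa [zero_sub, norm_neg] at this
  have hd0 : ∀ n, 0 ≤ d n := fun n => le_ciInf fun _ => norm_nonneg _
  have hmonod : Monotone d := by
    intro n m hnm
    exact le_ciInf fun w => by
      have := hd_le n w (hmono hnm w.2); rwa [zero_sub, norm_neg]
  obtain ⟨R, hR⟩ := (isBounded_iff_forall_norm_le).1 hbdd
  have hdR : ∀ n, d n ≤ R := fun n => (hpn n) ▸ hR _ (hmono (Nat.zero_le n) (hpB n))
  have hbdd' : BddAbove (Set.range d) := ⟨R, Set.forall_mem_range.2 hdR⟩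
  set D : ℝ := ⨆ n, d n with hD
  have htend : Tendsto d atTop (𝓝 D) := tendsto_atTop_ciSup hmonod hbdd'
  have hdD : ∀ n, d n ≤ D := fun n => le_ciSup hbdd' n
  -- Cauchy
  set b : ℕ → ℝ := fun n => Real.sqrt (4*D^2 - 4*(d n)^2) with hb
  have hcauchy : CauchySeq p := by
    apply cauchySeq_of_le_tendsto_0 b
    · intro n m N hn hm
      have hk : N ≤ min n m := le_min hn hm
      have hpnk : p n ∈ B (min n m) := hmono (min_le_left _ _) (hpB n)
      have hpmk : p m ∈ B (min n m) := hmono (min_le_right _ _) (hpB m)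
      have hmid : (2⁻¹ : ℝ) • p n + (2⁻¹ : ℝ) • p m ∈ B (min n m) :=
        (hconv _) hpnk hpmk (by norm_num) (by norm_num) (by norm_num)
      have h1 : d (min n m) ≤ ‖(2⁻¹ : ℝ) • p n + (2⁻¹ : ℝ) • p m‖ := hd_le _ _ hmid
      have h2 : ‖(2⁻¹ : ℝ) • p n + (2⁻¹ : ℝ) • p m‖ = ‖p n + p m‖ / 2 := by
        rw [← smul_add, norm_smul]; simp; ring
      have hpar := parallelogram_law_with_norm ℝ (p n) (p m)
      have hdN : d N ≤ d (min n m) := hmonod hk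
      have h0N : (0:ℝ) ≤ d N := hd0 N
      have hnn : dist (p n) (p m) = ‖p n - p m‖ := dist_eq_norm _ _
      rw [hnn]
      have hsq : ‖p n - p m‖^2 ≤ 4*D^2 - 4*(d N)^2 := by
        have e1 : ‖p n‖ = d n := hpn n
        have e2 : ‖p m‖ = d m := hpn m
        nlinarith [hdD n, hdD m, hd0 n, hd0 m, norm_nonneg (p n + p m), hd0 (min n m)]
      have := Real.sqrt_le_sqrt hsq
      rwa [Real.sqrt_sq (norm_nonneg _)] at this
    · have : Tendsto (fun n => 4*D^2 - 4*(d n)^2) atTop (𝓝 0) := by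
        have := ((htend.mul htend).const_mul (4:ℝ)).const_sub (4*D^2)
        simpa [sq, mul_assoc] using this
      have := this.sqrt
      rwa [Real.sqrt_zero] at this
  obtain ⟨q, hq⟩ := cauchySeq_tendsto_of_complete hcauchy
  refine ⟨q, Set.mem_iInter.2 fun n => ?_⟩
  exact (hcl n).mem_of_tendsto hq (eventually_atTop.2 ⟨n, fun m hm => hmono hm (hpB m)⟩)

lemma image_isClosed_of_convex {H F : Type*} [NormedAddCommGroup H] [InnerProductSpace ℝ H]
    [CompleteSpace H] [NormedAddCommGroup F] [NormedSpace ℝ F]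
    (Φ : H →L[ℝ] F) (𝒜 : Set H) (hcl : IsClosed 𝒜)
    (hconv : Convex ℝ 𝒜) (hbdd : Bornology.IsBounded 𝒜) : IsClosed (Φ '' 𝒜) := by
  rcases 𝒜.eq_empty_or_nonempty with h | hne
  · simp [h]
  refine isClosed_of_closure_subset ?_
  intro x hx
  set B : ℕ → Set H := fun n => 𝒜 ∩ Φ ⁻¹' Metric.closedBall x (1/(n+1)) with hB
  have hne' : ∀ n, (B n).Nonempty := by
    intro n
    obtain ⟨y, hy, hdy⟩ := Metric.mem_closure_iff.1 hx (1/(n+1)) (by positivity)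
    obtain ⟨p, hp, rfl⟩ := hy
    exact ⟨p, hp, by simpa [Metric.mem_closedBall, dist_comm] using hdy.le⟩
  have hcl' : ∀ n, IsClosed (B n) :=
    fun n => hcl.inter (Metric.isClosed_closedBall.preimage Φ.continuous)
  have hconv' : ∀ n, Convex ℝ (B n) := fun n =>
    hconv.inter ((convex_closedBall x _).linear_preimage Φ.toLinearMap)
  have hmono : ∀ {n m : ℕ}, n ≤ m → B m ⊆ B n := by
    intro n m hnm
    refine Set.inter_subset_inter_right _ (Set.preimage_mono ?_)
    exact Metric.closedBall_subset_closedBall (by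
      have : (n:ℝ) ≤ m := Nat.cast_le.2 hnm
      apply one_div_le_one_div_of_le <;> linarith)
  obtain ⟨q, hq⟩ := nested_inter_nonempty B hne' hcl' hconv'
    (fun h => hmono h) (hbdd.subset Set.inter_subset_left)
  have hq' : ∀ n : ℕ, q ∈ B n := Set.mem_iInter.1 hq
  refine ⟨q, (hq' 0).1, ?_⟩
  have hdist : ∀ n : ℕ, dist (Φ q) x ≤ 1/(n+1) := fun n => (hq' n).2
  have h0 : dist (Φ q) x ≤ 0 := by
    refine ge_of_tendsto' tendsto_one_div_add_atTop_nhds_zero_nat fun n => hdist n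
  exact (dist_le_zero.1 h0)

set_option maxHeartbeats 1000000 in
/-- On a nonempty, closed, bounded, convex set `𝒜 ⊆ ℝ × L²(Y)`, with `σ`
Lipschitz, `f₁,…,f_N ∈ L²(Y)` and `r ∈ ℝ^N`, the functional
`T_{F,r}(a,b) = ∑_j σ(a − ∫_Y b f_j) r_j` attains its minimum on `𝒜`. -/
theorem T_attains_min_on_convex_bounded_closed
    {d N : ℕ} (Y : Set (Fin d → ℝ)) (hYmeas : MeasurableSet Y)
    (L : NNReal) (σ : ℝ → ℝ) (hσ : LipschitzWith L σ)
    (f : Fin N → Lp ℝ 2 (volume.restrict Y)) (r : Fin N → ℝ)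
    (𝒜 : Set (ℝ × Lp ℝ 2 (volume.restrict Y)))
    (h𝒜ne : 𝒜.Nonempty) (h𝒜closed : IsClosed 𝒜)
    (h𝒜bdd : Bornology.IsBounded 𝒜) (h𝒜conv : Convex ℝ 𝒜) :
    ∃ p ∈ 𝒜, ∀ q ∈ 𝒜,
      (∑ j, σ (p.1 - ∫ z, p.2 z * f j z ∂(volume.restrict Y)) * r j) ≤
        ∑ j, σ (q.1 - ∫ z, q.2 z * f j z ∂(volume.restrict Y)) * r j := by
  classical
  -- the integral is an inner product
  have hinner : ∀ (b : Lp ℝ 2 (volume.restrict Y)) (j : Fin N),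
      (∫ z, b z * f j z ∂(volume.restrict Y)) = (inner ℝ (f j) b : ℝ) := by
    intro b j
    rw [MeasureTheory.L2.inner_def]
    simp [RCLike.inner_apply, mul_comm]
  let e : WithLp 2 (ℝ × Lp ℝ 2 (volume.restrict Y)) ≃L[ℝ] ℝ × Lp ℝ 2 (volume.restrict Y) :=
    WithLp.prodContinuousLinearEquiv 2 ℝ ℝ (Lp ℝ 2 (volume.restrict Y))
  let Φ : WithLp 2 (ℝ × Lp ℝ 2 (volume.restrict Y)) →L[ℝ] ℝ × (Fin N → ℝ) :=
    ((ContinuousLinearMap.fst ℝ ℝ (Lp ℝ 2 (volume.restrict Y))).prod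
      (ContinuousLinearMap.pi fun j => (innerSL ℝ (f j)).comp
        (ContinuousLinearMap.snd ℝ ℝ (Lp ℝ 2 (volume.restrict Y))))).comp (e : _ →L[ℝ] _)
  have hΦeval : ∀ q : WithLp 2 (ℝ × Lp ℝ 2 (volume.restrict Y)),
      Φ q = ((e q).1, fun j => (inner ℝ (f j) (e q).2 : ℝ)) := by
    intro q; rfl
  set 𝒜' : Set (WithLp 2 (ℝ × Lp ℝ 2 (volume.restrict Y))) := ⇑e ⁻¹' 𝒜 with h𝒜'
  have hcl' : IsClosed 𝒜' := h𝒜closed.preimage e.continuous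
  have hconv' : Convex ℝ 𝒜' := h𝒜conv.linear_preimage (e.toLinearEquiv.toLinearMap :
    WithLp 2 (ℝ × Lp ℝ 2 (volume.restrict Y)) →ₗ[ℝ] ℝ × Lp ℝ 2 (volume.restrict Y))
  have hbdd' : Bornology.IsBounded 𝒜' := by
    have himg : ⇑e.symm '' 𝒜 = 𝒜' := e.image_symm_eq_preimage 𝒜
    rw [← himg]
    exact e.symm.lipschitz.isBounded_image h𝒜bdd
  have hmem : ∀ q ∈ 𝒜, e.symm q ∈ 𝒜' := by
    intro q hq; simp [h𝒜', Set.mem_preimage, hq]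
  set K : Set (ℝ × (Fin N → ℝ)) := ⇑Φ '' 𝒜' with hK
  have hKcl : IsClosed K := image_isClosed_of_convex Φ 𝒜' hcl' hconv' hbdd'
  have hKbdd : Bornology.IsBounded K := Φ.lipschitz.isBounded_image hbdd'
  have hKcompact : IsCompact K := Metric.isCompact_of_isClosed_isBounded hKcl hKbdd
  obtain ⟨p0, hp0⟩ := h𝒜ne
  have hKne : K.Nonempty := ⟨Φ (e.symm p0), Set.mem_image_of_mem _ (hmem p0 hp0)⟩
  set g : ℝ × (Fin N → ℝ) → ℝ := fun x => ∑ j, σ (x.1 - x.2 j) * r j with hg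
  have hgcont : Continuous g := by
    apply continuous_finset_sum
    intro j _
    exact (hσ.continuous.comp (continuous_fst.sub
      ((continuous_apply j).comp continuous_snd))).mul continuous_const
  obtain ⟨x, hxK, hxmin⟩ := hKcompact.exists_isMinOn hKne hgcont.continuousOn
  obtain ⟨q', hq', rfl⟩ := hxK
  rw [isMinOn_iff] at hxmin
  refine ⟨e q', hq', ?_⟩
  intro q hq
  have h1 : g (Φ q') ≤ g (Φ (e.symm q)) :=
    hxmin _ (Set.mem_image_of_mem _ (hmem q hq))
  have heq : ∀ (w : ℝ × Lp ℝ 2 (volume.restrict Y)) (hw : w ∈ 𝒜),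
      g (Φ (e.symm w)) = ∑ j, σ (w.1 - ∫ z, w.2 z * f j z ∂(volume.restrict Y)) * r j := by
    intro w _
    rw [hΦeval]
    simp only [e.apply_symm_apply, hg]
    congr 1
  have heq' : g (Φ q') = ∑ j, σ ((e q').1 - ∫ z, (e q').2 z * f j z ∂(volume.restrict Y)) * r j := by
    have := heq (e q') (by simpa [h𝒜'] using hq')
    rwa [e.symm_apply_apply] at this
  rw [heq', heq q hq] at h1
  exact h1
end
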